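/- Let g = (√5−1)/2 and suppose g < α ≤ 1. Define φ_α(x) = 1/|x| − d_α(x) where d_α(x) = 2⌊1/(2|x|) + (1−α)/2⌋ + 1. Then −1/(3+α) < φ_α(α−2) ≤ 0 ≤ φ_α(α) < 1/(1+α), where φ_α(α) is interpreted as 1/α − 1 and φ_α(α−2) as 1/(2−α) − 1. -/

import Mathlib

/-- For g < α ≤ 1: −1/(3+α) < φ_α(α−2) ≤ 0 ≤ φ_α(α) < 1/(1+α),
with φ_α(α) = 1/α − 1 and φ_α(α−2) = 1/(2−α) − 1. -/
theorem stmt1 (α : ℝ) (h1 : (Real.sqrt 5 - 1)/2 < α) (h2 : α ≤ 1) :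
    -1/(3+α) < 1/(2-α) - 1 ∧ 1/(2-α) - 1 ≤ 0 ∧ (0:ℝ) ≤ 1/α - 1 ∧
      1/α - 1 < 1/(1+α) := by
  have hs : Real.sqrt 5 ^ 2 = 5 := Real.sq_sqrt (by norm_num)
  have hsn : (2:ℝ) ≤ Real.sqrt 5 := by
    nlinarith [Real.sqrt_nonneg 5]
  have hkey : α^2 + α - 1 > 0 := by nlinarith
  have hα : 0 < α := by nlinarith
  have h2α : (0:ℝ) < 2 - α := by linarith
  have h3α : (0:ℝ) < 3 + α := by linarith
  have h1α : (0:ℝ) < 1 + α := by linarith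
  refine ⟨?_, ?_, ?_, ?_⟩
  · rw [div_sub' (ne_of_gt h2α), div_lt_div_iff₀ h3α h2α]
    nlinarith
  · rw [div_sub' (ne_of_gt h2α)]
    apply div_nonpos_of_nonpos_of_nonneg <;> linarith
  · rw [le_sub_iff_add_le, zero_add, le_div_iff₀ hα]; linarith
  · rw [div_sub' (ne_of_gt hα), div_lt_div_iff₀ hα h1α]
    nlinarith
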